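/- Let λ be a finite measure on X with R 1 λ-integrable, and let ν be a finite measure which is the action of R on λ (∫ f dν = ∫ R f dλ for every bounded measurable f : X → ℝ). Then Measure.map σ ν = λ.withDensity (R 1). In particular, if R is normalized (R 1 = 1), then Measure.map σ ν = λ, i.e. (λR) ∘ σ⁻¹ = λ. -/

import Mathlib

open MeasureTheory

/-- `(λR) ∘ σ⁻¹ = λ.withDensity (R 1)`; in particular `(λR) ∘ σ⁻¹ = λ` when `R`
is normalized. -/
theorem stmt_11 {X : Type*} [MeasurableSpace X] (σ : X → X)
    (hσ : Measurable σ) (hσsurj : Function.Surjective σ)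
    (R : (X → ℝ) → (X → ℝ))
    (hadd : ∀ f g : X → ℝ, R (f + g) = R f + R g)
    (hsmul : ∀ (c : ℝ) (f : X → ℝ), R (c • f) = c • R f)
    (hmeas : ∀ f : X → ℝ, Measurable f → Measurable (R f))
    (hpos : ∀ f : X → ℝ, 0 ≤ f → 0 ≤ R f)
    (hpull : ∀ f g : X → ℝ, Measurable f → Measurable g →
      R ((f ∘ σ) * g) = f * R g)
    (lam : Measure X) [IsFiniteMeasure lam]
    (hint : Integrable (R 1) lam)
    (ν : Measure X) [IsFiniteMeasure ν]
    (hν : ∀ f : X → ℝ, Measurable f → (∃ C : ℝ, ∀ x, |f x| ≤ C) →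
      ∫ x, f x ∂ν = ∫ x, R f x ∂lam) :
    Measure.map σ ν = lam.withDensity (fun x => ENNReal.ofReal (R 1 x)) ∧
      (R 1 = 1 → Measure.map σ ν = lam) := by
  have hR1 : Measurable (R 1) := hmeas 1 measurable_one
  have hR1nn : 0 ≤ R 1 := hpos 1 (by intro x; simp)
  have key : Measure.map σ ν = lam.withDensity (fun x => ENNReal.ofReal (R 1 x)) := by
    ext s hs
    rw [Measure.map_apply hσ hs, withDensity_apply _ hs]
    have hind : Measurable (s.indicator (1 : X → ℝ)) := measurable_const.indicator hs
    have hcomp : (s.indicator (1 : X → ℝ)) ∘ σ * 1 = (σ ⁻¹' s).indicator (1 : X → ℝ) := by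
      funext x
      by_cases h : σ x ∈ s <;> simp [Set.indicator_apply, h, Function.comp]
    have hpull' := hpull (s.indicator 1) 1 hind measurable_one
    rw [hcomp] at hpull'
    have hb : ∃ C : ℝ, ∀ x, |((σ ⁻¹' s).indicator (1 : X → ℝ)) x| ≤ C := by
      refine ⟨1, fun x => ?_⟩
      by_cases h : x ∈ σ ⁻¹' s <;> simp [h]
    have h1 := hν ((σ ⁻¹' s).indicator (1 : X → ℝ)) (measurable_const.indicator (hσ hs)) hb
    rw [hpull'] at h1
    have hRint : (fun x => (s.indicator (1 : X → ℝ) * R 1) x) = s.indicator (R 1) := by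
      funext x
      by_cases h : x ∈ s <;> simp [Set.indicator_apply, h]
    have h2 : ∫ x, ((σ ⁻¹' s).indicator (1 : X → ℝ)) x ∂ν = (ν (σ ⁻¹' s)).toReal := by
      rw [MeasureTheory.integral_indicator_one (hσ hs)]
      rfl
    have h3 : ∫ x, (s.indicator (1 : X → ℝ) * R 1) x ∂lam = ∫ x in s, R 1 x ∂lam := by
      rw [hRint, integral_indicator hs]
    have h4 : ∫⁻ x in s, ENNReal.ofReal (R 1 x) ∂lam
        = ENNReal.ofReal (∫ x in s, R 1 x ∂lam) := by
      rw [← ofReal_integral_eq_lintegral_ofReal (hint.restrict)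
        (Filter.Eventually.of_forall (fun x => hR1nn x))]
    rw [h4, ← h3, ← h1, h2, ENNReal.ofReal_toReal (measure_ne_top ν _)]
  refine ⟨key, fun h => ?_⟩
  rw [key, h]
  simp [withDensity_one]
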